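/- Let p > 1. There exists a constant C = C(p) such that for every measurable function F : ℝ → [0,∞) satisfying ∫_I F(ξ)^p dξ ≤ |I|^{1 − p/2} for every bounded interval I ⊂ ℝ (where |I| is the length of I), one has ∬_{ℝ×ℝ} F(ξ)^{3/2} F(η)^{3/2} |ξ − η|^{-1/2} dξ dη ≤ C ∫_ℝ F(ξ)² dξ. -/

import Mathlib

open MeasureTheory Filter Topology Complex

noncomputable section

/-- The Fourier transform `f̂(ξ) = ∫ e^{-i x ξ} f(x) dx`. -/
def FT (f : ℝ → ℂ) (ξ : ℝ) : ℂ := ∫ x : ℝ, Complex.exp (-(Complex.I * x * ξ)) * f x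

/-- The Airy evolution `e^{-t∂ₓ³} f (x) = ∫ e^{i(xξ + tξ³)} f̂(ξ) dξ`. -/
def airy (t : ℝ) (f : ℝ → ℂ) (x : ℝ) : ℂ :=
  ∫ ξ : ℝ, Complex.exp (Complex.I * (x * ξ + t * ξ ^ 3)) * FT f ξ

/-- `D^{1/6} e^{-(t-t₀)∂ₓ³} f`, viewed as a function of `(t, x) ∈ ℝ × ℝ`. -/
def airyD6shift (t₀ : ℝ) (f : ℝ → ℂ) (p : ℝ × ℝ) : ℂ :=
  ∫ ξ : ℝ, Complex.exp (Complex.I * (p.2 * ξ + (p.1 - t₀) * ξ ^ 3)) *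
    ((|ξ| ^ ((1 : ℝ)/6) : ℝ) : ℂ) * FT f ξ

/-- `D^{1/6} e^{-t∂ₓ³} f`, viewed as a function of `(t, x) ∈ ℝ × ℝ`. -/
def airyD6 (f : ℝ → ℂ) : ℝ × ℝ → ℂ := airyD6shift 0 f

/-- The Schrödinger evolution `e^{-it∂ₓ²} f`, viewed as a function of `(t,x) ∈ ℝ × ℝ`. -/
def schrod (f : ℝ → ℂ) (p : ℝ × ℝ) : ℂ :=
  ∫ ξ : ℝ, Complex.exp (Complex.I * (p.2 * ξ + p.1 * ξ ^ 2)) * FT f ξ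

/-- The transformation `g_{θ,x₀,h₀} f (x) = h₀^{-1/2} e^{iθ} f((x-x₀)/h₀)` with `θ = 0`. -/
def gT (x₀ h₀ : ℝ) (f : ℝ → ℂ) (x : ℝ) : ℂ :=
  ((h₀ ^ (-(1 : ℝ)/2) : ℝ) : ℂ) * f ((x - x₀) / h₀)

/-- Modulation `e^{i(·)a} φ`. -/
def modF (a : ℝ) (φ : ℝ → ℂ) (x : ℝ) : ℂ := Complex.exp (Complex.I * x * a) * φ x

/-- Orthogonality of two sequences of parameters `(h, ξ, x, t) ∈ (0,∞) × ℝ³`. -/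
def OrthoSeq (Γj Γk : ℕ → ℝ × ℝ × ℝ × ℝ) : Prop :=
  Tendsto (fun n => (Γj n).1 / (Γk n).1 + (Γk n).1 / (Γj n).1
      + (Γj n).1 * |(Γj n).2.1 - (Γk n).2.1|) atTop atTop
  ∨ ((∀ n, (Γj n).1 = (Γk n).1 ∧ (Γj n).2.1 = (Γk n).2.1) ∧
     Tendsto (fun n =>
       |(Γk n).2.2.2 - (Γj n).2.2.2| / (Γj n).1 ^ 3
       + 3 * |((Γk n).2.2.2 - (Γj n).2.2.2) * (Γj n).2.1| / (Γj n).1 ^ 2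
       + |(Γj n).2.2.1 - (Γk n).2.2.1
           + 3 * ((Γj n).2.2.2 - (Γk n).2.2.2) * (Γj n).2.1 ^ 2| / (Γj n).1)
       atTop atTop)

end

noncomputable section

open MeasureTheory Set
open scoped ENNReal NNReal

namespace WSC

/-- truncation pointwise bound -/
lemma rpow_trunc {A x q : ℝ} (hx : 0 ≤ x) (hxA : x ≤ A) (hq0 : 0 < q) (hq : q ≤ 3/2) :
    x ^ ((3:ℝ)/2) ≤ A ^ ((3:ℝ)/2 - q) * x ^ q := by
  rcases eq_or_lt_of_le hx with h0 | h0
  · rw [← h0, Real.zero_rpow (by norm_num : ((3:ℝ)/2) ≠ 0), Real.zero_rpow hq0.ne', mul_zero]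
  · have hA : 0 < A := lt_of_lt_of_le h0 hxA
    have hsplit : x ^ ((3:ℝ)/2) = x ^ ((3:ℝ)/2 - q) * x ^ q := by
      rw [← Real.rpow_add h0]; ring_nf
    rw [hsplit]
    have h1 : x ^ ((3:ℝ)/2 - q) ≤ A ^ ((3:ℝ)/2 - q) :=
      Real.rpow_le_rpow hx hxA (by linarith)
    exact mul_le_mul_of_nonneg_right h1 (Real.rpow_nonneg hx q)

lemma near_id (A : ℝ) (hA : 0 < A) (j : ℝ) :
    (A ^ (-2:ℝ) * (2:ℝ) ^ (-j-1)) ^ (-(1:ℝ)/2)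
      * (A ^ ((3:ℝ)/2) * ((2:ℝ)^(1:ℝ) * (A ^ (-2:ℝ) * (2:ℝ) ^ (-j))))
    = A ^ ((1:ℝ)/2) * (2:ℝ) ^ ((3:ℝ)/2) * (2:ℝ) ^ (-j/2) := by
  rw [Real.mul_rpow (Real.rpow_pos_of_pos hA _).le (Real.rpow_pos_of_pos two_pos _).le,
    ← Real.rpow_mul hA.le, ← Real.rpow_mul (by norm_num : (0:ℝ) ≤ 2)]
  simp only [Real.rpow_def_of_pos hA, Real.rpow_def_of_pos two_pos, ← Real.exp_add,
    Real.exp_eq_exp]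
  ring

lemma far_id (A : ℝ) (hA : 0 < A) (q j : ℝ) :
    (A ^ (-2:ℝ) * (2:ℝ) ^ j) ^ (-(1:ℝ)/2)
      * (A ^ ((3:ℝ)/2 - q) * ((2:ℝ)^(1:ℝ) * (A ^ (-2:ℝ) * (2:ℝ) ^ (j+1))) ^ (1 - q/2))
    = A ^ ((1:ℝ)/2) * (2:ℝ) ^ ((2:ℝ) - q) * (2:ℝ) ^ (j*((1-q)/2)) := by
  rw [Real.mul_rpow (Real.rpow_pos_of_pos hA _).le (Real.rpow_pos_of_pos two_pos _).le,
    Real.mul_rpow (Real.rpow_pos_of_pos two_pos _).le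
      (mul_pos (Real.rpow_pos_of_pos hA _) (Real.rpow_pos_of_pos two_pos _)).le,
    Real.mul_rpow (Real.rpow_pos_of_pos hA _).le (Real.rpow_pos_of_pos two_pos _).le,
    ← Real.rpow_mul hA.le, ← Real.rpow_mul (by norm_num : (0:ℝ) ≤ 2),
    ← Real.rpow_mul hA.le, ← Real.rpow_mul (by norm_num : (0:ℝ) ≤ 2),
    ← Real.rpow_mul (by norm_num : (0:ℝ) ≤ 2)]
  simp only [Real.rpow_def_of_pos hA, Real.rpow_def_of_pos two_pos, ← Real.exp_add,
    Real.exp_eq_exp]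
  ring

/-- the indicator integrand -/
def ind (F : ℝ → ℝ) (A : ℝ) : ℝ → ℝ≥0∞ :=
  ({η | F η ≤ A}).indicator (fun η => ENNReal.ofReal (F η) ^ ((3:ℝ)/2))

lemma ind_meas {F : ℝ → ℝ} (hF : Measurable F) (A : ℝ) : Measurable (ind F A) :=
  ((hF.ennreal_ofReal).pow_const _).indicator (measurableSet_le hF measurable_const)

lemma mass_trivial {F : ℝ → ℝ} (hF0 : ∀ ζ, 0 ≤ F ζ) {A : ℝ} (hA : 0 ≤ A) (a b : ℝ) :
    ∫⁻ η in Icc a b, ind F A η ≤ ENNReal.ofReal (A ^ ((3:ℝ)/2) * (b - a)) := by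
  have hpt : ∀ η, ind F A η ≤ ENNReal.ofReal (A ^ ((3:ℝ)/2)) := by
    intro η
    by_cases h : F η ≤ A
    · rw [ind, Set.indicator_of_mem (show η ∈ {η | F η ≤ A} from h),
        ENNReal.ofReal_rpow_of_nonneg (hF0 η) (by norm_num : (0:ℝ) ≤ (3:ℝ)/2)]
      exact ENNReal.ofReal_le_ofReal (Real.rpow_le_rpow (hF0 η) h (by norm_num))
    · rw [ind, Set.indicator_of_notMem (show η ∉ {η | F η ≤ A} from h)]; exact zero_le'
  calc ∫⁻ η in Icc a b, ind F A η ≤ ∫⁻ _ in Icc a b, ENNReal.ofReal (A ^ ((3:ℝ)/2)) :=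
        lintegral_mono hpt
    _ = ENNReal.ofReal (A ^ ((3:ℝ)/2)) * volume (Icc a b) := setLIntegral_const _ _
    _ = ENNReal.ofReal (A ^ ((3:ℝ)/2) * (b - a)) := by
        rw [Real.volume_Icc, ← ENNReal.ofReal_mul (Real.rpow_nonneg hA _)]

lemma mass_q {F : ℝ → ℝ} (hF : Measurable F) (hF0 : ∀ ζ, 0 ≤ F ζ) {q : ℝ}
    (hq0 : 0 < q) (hq2 : q ≤ 3/2)
    (HQ : ∀ a b : ℝ, a < b →
      ∫⁻ ζ in Ioo a b, ENNReal.ofReal (F ζ) ^ q ≤ ENNReal.ofReal ((b-a)^(1-q/2)))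
    {A : ℝ} (hA : 0 < A) {a b : ℝ} (hab : a < b) :
    ∫⁻ η in Icc a b, ind F A η
      ≤ ENNReal.ofReal (A ^ ((3:ℝ)/2 - q)) * ENNReal.ofReal ((b-a)^(1-q/2)) := by
  have hpt : ∀ η, ind F A η ≤ ENNReal.ofReal (A ^ ((3:ℝ)/2 - q)) * ENNReal.ofReal (F η) ^ q := by
    intro η
    by_cases h : F η ≤ A
    · rw [ind, Set.indicator_of_mem (show η ∈ {η | F η ≤ A} from h),
        ENNReal.ofReal_rpow_of_nonneg (hF0 η) (by norm_num : (0:ℝ) ≤ (3:ℝ)/2),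
        ENNReal.ofReal_rpow_of_nonneg (hF0 η) hq0.le,
        ← ENNReal.ofReal_mul (Real.rpow_nonneg hA.le _)]
      exact ENNReal.ofReal_le_ofReal (rpow_trunc (hF0 η) h hq0 hq2)
    · rw [ind, Set.indicator_of_notMem (show η ∉ {η | F η ≤ A} from h)]; exact zero_le'
  calc ∫⁻ η in Icc a b, ind F A η
      = ∫⁻ η in Ioo a b, ind F A η := (setLIntegral_congr (Ioo_ae_eq_Icc)).symm
    _ ≤ ∫⁻ η in Ioo a b, ENNReal.ofReal (A ^ ((3:ℝ)/2 - q)) * ENNReal.ofReal (F η) ^ q :=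
        lintegral_mono hpt
    _ = ENNReal.ofReal (A ^ ((3:ℝ)/2 - q)) * ∫⁻ η in Ioo a b, ENNReal.ofReal (F η) ^ q :=
        lintegral_const_mul' _ _ ENNReal.ofReal_ne_top
    _ ≤ ENNReal.ofReal (A ^ ((3:ℝ)/2 - q)) * ENNReal.ofReal ((b-a)^(1-q/2)) :=
        mul_le_mul_right (HQ a b hab) _

lemma term_bound {F : ℝ → ℝ} {A x c d : ℝ} (hc : 0 < c) (M : ℝ≥0∞)
    (hM : ∫⁻ η in Icc (x - d) (x + d), ind F A η ≤ M) :
    ∫⁻ η in {η | c < |x - η| ∧ |x - η| ≤ d},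
        ind F A η * ENNReal.ofReal (|x - η| ^ (-(1:ℝ)/2))
      ≤ ENNReal.ofReal (c ^ (-(1:ℝ)/2)) * M := by
  have hm : Measurable fun η : ℝ => |x - η| := (measurable_const.sub measurable_id).abs
  have hs : MeasurableSet {η | c < |x - η| ∧ |x - η| ≤ d} :=
    (measurableSet_lt measurable_const hm).inter (measurableSet_le hm measurable_const)
  have hsub : {η | c < |x - η| ∧ |x - η| ≤ d} ⊆ Icc (x - d) (x + d) := by
    intro η hη
    have h1 := abs_le.mp hη.2
    constructor <;> [linarith [h1.2]; linarith [h1.1]]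
  calc ∫⁻ η in {η | c < |x - η| ∧ |x - η| ≤ d},
        ind F A η * ENNReal.ofReal (|x - η| ^ (-(1:ℝ)/2))
      ≤ ∫⁻ η in {η | c < |x - η| ∧ |x - η| ≤ d},
          ENNReal.ofReal (c ^ (-(1:ℝ)/2)) * ind F A η := by
        apply setLIntegral_mono' hs
        intro η hη
        rw [mul_comm (ENNReal.ofReal (c ^ (-(1:ℝ)/2)))]
        refine mul_le_mul_right (ENNReal.ofReal_le_ofReal ?_) _
        exact Real.rpow_le_rpow_of_nonpos hc hη.1.le (by norm_num)
    _ = ENNReal.ofReal (c ^ (-(1:ℝ)/2)) *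
          ∫⁻ η in {η | c < |x - η| ∧ |x - η| ≤ d}, ind F A η :=
        lintegral_const_mul' _ _ ENNReal.ofReal_ne_top
    _ ≤ ENNReal.ofReal (c ^ (-(1:ℝ)/2)) * M :=
        mul_le_mul_right ((lintegral_mono_set hsub).trans hM) _

lemma cover {R u : ℝ} (hR : 0 < R) (hu : 0 < u) :
    (∃ j : ℕ, R * 2^(-(j:ℝ)-1) < u ∧ u ≤ R * 2^(-(j:ℝ)))
    ∨ (∃ j : ℕ, R * 2^((j:ℝ)) < u ∧ u ≤ R * 2^((j:ℝ)+1)) := by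
  have key : ∀ n : ℕ, (2:ℝ) ^ ((n:ℝ)) = (2:ℝ) ^ n := fun n => Real.rpow_natCast 2 n
  rcases le_or_gt u R with h | h
  · left
    have hex : ∃ n : ℕ, R * 2^(-(n:ℝ)-1) < u := by
      obtain ⟨n, hn⟩ := pow_unbounded_of_one_lt (R / u) (one_lt_two (α := ℝ))
      refine ⟨n, ?_⟩
      have h2 : (2:ℝ) ^ (-(n:ℝ)-1) = ((2:ℝ) ^ (n+1 : ℕ))⁻¹ := by
        rw [show -(n:ℝ)-1 = -((n:ℝ)+1) by ring, Real.rpow_neg (by norm_num : (0:ℝ) ≤ 2)]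
        congr 1
        rw [← Real.rpow_natCast 2 (n+1)]
        push_cast
        ring_nf
      rw [h2]
      have hlt : R / u < (2:ℝ) ^ (n+1 : ℕ) :=
        lt_of_lt_of_le hn (pow_le_pow_right₀ one_le_two (Nat.le_succ n))
      have hp : (0:ℝ) < (2:ℝ) ^ (n+1 : ℕ) := by positivity
      rw [mul_inv_lt_iff₀ hp]
      calc R = (R / u) * u := by field_simp
        _ < (2:ℝ) ^ (n+1 : ℕ) * u := by
            exact mul_lt_mul_of_pos_right hlt hu
        _ = u * (2:ℝ) ^ (n+1 : ℕ) := mul_comm _ _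
    refine ⟨Nat.find hex, Nat.find_spec hex, ?_⟩
    rcases Nat.eq_zero_or_pos (Nat.find hex) with h0 | h0
    · rw [h0]
      simp only [Nat.cast_zero, neg_zero, Real.rpow_zero, mul_one]
      exact h
    · obtain ⟨k, hk⟩ := Nat.exists_eq_succ_of_ne_zero h0.ne'
      have hmin := Nat.find_min hex (m := k) (by omega)
      push_neg at hmin
      rw [hk]
      have : -((k+1 : ℕ):ℝ) = -(k:ℝ)-1 := by push_cast; ring
      rw [this]
      exact hmin
  · right
    have hex : ∃ n : ℕ, u ≤ R * 2^((n:ℝ)+1) := by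
      obtain ⟨n, hn⟩ := pow_unbounded_of_one_lt (u / R) (one_lt_two (α := ℝ))
      refine ⟨n, ?_⟩
      have h2 : (2:ℝ) ^ ((n:ℝ)+1) = (2:ℝ) ^ (n+1 : ℕ) := by
        rw [← Real.rpow_natCast 2 (n+1)]; push_cast; ring_nf
      rw [h2]
      have hlt : u / R < (2:ℝ) ^ (n+1 : ℕ) :=
        lt_of_lt_of_le hn (pow_le_pow_right₀ one_le_two (Nat.le_succ n))
      have := (div_lt_iff₀ hR).mp hlt
      nlinarith
    refine ⟨Nat.find hex, ?_, Nat.find_spec hex⟩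
    rcases Nat.eq_zero_or_pos (Nat.find hex) with h0 | h0
    · rw [h0]
      simp only [Nat.cast_zero, Real.rpow_zero, mul_one]
      exact h
    · obtain ⟨k, hk⟩ := Nat.exists_eq_succ_of_ne_zero h0.ne'
      have hmin := Nat.find_min hex (m := k) (by omega)
      push_neg at hmin
      rw [hk]
      have : ((k+1 : ℕ):ℝ) = (k:ℝ)+1 := by push_cast; ring
      rw [this]
      exact hmin


def Dconst (q : ℝ) : ℝ≥0∞ :=
  ENNReal.ofReal ((2:ℝ) ^ ((3:ℝ)/2)) * (1 - ENNReal.ofReal ((2:ℝ) ^ (-(1:ℝ)/2)))⁻¹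
  + ENNReal.ofReal ((2:ℝ) ^ ((2:ℝ) - q)) * (1 - ENNReal.ofReal ((2:ℝ) ^ ((1-q)/2)))⁻¹

lemma Dconst_ne_top {q : ℝ} (hq1 : 1 < q) : Dconst q ≠ ⊤ := by
  have h1 : ENNReal.ofReal ((2:ℝ) ^ (-(1:ℝ)/2)) < 1 :=
    ENNReal.ofReal_lt_one.mpr (Real.rpow_lt_one_of_one_lt_of_neg one_lt_two (by norm_num))
  have h2 : ENNReal.ofReal ((2:ℝ) ^ ((1-q)/2)) < 1 :=
    ENNReal.ofReal_lt_one.mpr (Real.rpow_lt_one_of_one_lt_of_neg one_lt_two (by linarith))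
  have i1 : (1 - ENNReal.ofReal ((2:ℝ) ^ (-(1:ℝ)/2)))⁻¹ ≠ ⊤ :=
    ENNReal.inv_ne_top.mpr (tsub_pos_of_lt h1).ne'
  have i2 : (1 - ENNReal.ofReal ((2:ℝ) ^ ((1-q)/2)))⁻¹ ≠ ⊤ :=
    ENNReal.inv_ne_top.mpr (tsub_pos_of_lt h2).ne'
  exact ENNReal.add_ne_top.mpr ⟨ENNReal.mul_ne_top ENNReal.ofReal_ne_top i1,
    ENNReal.mul_ne_top ENNReal.ofReal_ne_top i2⟩

lemma pow_geom_near (j : ℕ) : (2:ℝ)^(-(j:ℝ)/2) = ((2:ℝ)^(-(1:ℝ)/2))^j := by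
  rw [← Real.rpow_natCast ((2:ℝ)^(-(1:ℝ)/2)) j, ← Real.rpow_mul (by norm_num : (0:ℝ) ≤ 2)]
  congr 1
  ring

lemma pow_geom_far (q : ℝ) (j : ℕ) : (2:ℝ)^((j:ℝ)*((1-q)/2)) = ((2:ℝ)^((1-q)/2))^j := by
  rw [← Real.rpow_natCast ((2:ℝ)^((1-q)/2)) j, ← Real.rpow_mul (by norm_num : (0:ℝ) ≤ 2)]
  congr 1
  ring

lemma inner_bound {F : ℝ → ℝ} (hF : Measurable F) (hF0 : ∀ ζ, 0 ≤ F ζ) {q : ℝ}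
    (hq1 : 1 < q) (hq2 : q ≤ 3/2)
    (HQ : ∀ a b : ℝ, a < b →
      ∫⁻ ζ in Ioo a b, ENNReal.ofReal (F ζ) ^ q ≤ ENNReal.ofReal ((b-a)^(1-q/2)))
    (x : ℝ) (hx : 0 < F x) :
    ∫⁻ η, ind F (F x) η * ENNReal.ofReal (|x - η| ^ (-(1:ℝ)/2))
      ≤ ENNReal.ofReal (F x ^ ((1:ℝ)/2)) * Dconst q := by
  set A := F x with hA
  have hR : 0 < A ^ (-2:ℝ) := Real.rpow_pos_of_pos hx _
  -- near annuli bound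
  have hnear : ∀ j : ℕ,
      ∫⁻ η in {η | A ^ (-2:ℝ) * (2:ℝ)^(-(j:ℝ)-1) < |x - η| ∧
          |x - η| ≤ A ^ (-2:ℝ) * (2:ℝ)^(-(j:ℝ))},
        ind F A η * ENNReal.ofReal (|x - η| ^ (-(1:ℝ)/2))
      ≤ ENNReal.ofReal (A ^ ((1:ℝ)/2)) * ENNReal.ofReal ((2:ℝ)^((3:ℝ)/2)) *
          ENNReal.ofReal ((2:ℝ)^(-(1:ℝ)/2)) ^ j := by
    intro j
    have hcpos : 0 < A ^ (-2:ℝ) * (2:ℝ)^(-(j:ℝ)-1) :=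
      mul_pos hR (Real.rpow_pos_of_pos two_pos _)
    have hmass := mass_trivial hF0 hx.le (x - A ^ (-2:ℝ) * (2:ℝ)^(-(j:ℝ)))
      (x + A ^ (-2:ℝ) * (2:ℝ)^(-(j:ℝ)))
    rw [show x + A ^ (-2:ℝ) * (2:ℝ)^(-(j:ℝ)) - (x - A ^ (-2:ℝ) * (2:ℝ)^(-(j:ℝ)))
        = (2:ℝ)^(1:ℝ) * (A ^ (-2:ℝ) * (2:ℝ)^(-(j:ℝ))) by rw [Real.rpow_one]; ring] at hmass
    have hterm := term_bound hcpos _ hmass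
    calc ∫⁻ η in {η | A ^ (-2:ℝ) * (2:ℝ)^(-(j:ℝ)-1) < |x - η| ∧
          |x - η| ≤ A ^ (-2:ℝ) * (2:ℝ)^(-(j:ℝ))},
        ind F A η * ENNReal.ofReal (|x - η| ^ (-(1:ℝ)/2))
        ≤ ENNReal.ofReal ((A ^ (-2:ℝ) * (2:ℝ)^(-(j:ℝ)-1)) ^ (-(1:ℝ)/2)) *
            ENNReal.ofReal (A ^ ((3:ℝ)/2) * ((2:ℝ)^(1:ℝ) * (A ^ (-2:ℝ) * (2:ℝ)^(-(j:ℝ))))) :=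
          hterm
      _ = ENNReal.ofReal ((A ^ (-2:ℝ) * (2:ℝ)^(-(j:ℝ)-1)) ^ (-(1:ℝ)/2) *
            (A ^ ((3:ℝ)/2) * ((2:ℝ)^(1:ℝ) * (A ^ (-2:ℝ) * (2:ℝ)^(-(j:ℝ)))))) :=
          (ENNReal.ofReal_mul (Real.rpow_nonneg hcpos.le _)).symm
      _ = ENNReal.ofReal (A ^ ((1:ℝ)/2) * (2:ℝ)^((3:ℝ)/2) * (2:ℝ)^(-(j:ℝ)/2)) := by
          rw [near_id A hx (j:ℝ)]
      _ = ENNReal.ofReal (A ^ ((1:ℝ)/2)) * ENNReal.ofReal ((2:ℝ)^((3:ℝ)/2)) *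
            ENNReal.ofReal ((2:ℝ)^(-(1:ℝ)/2)) ^ j := by
          rw [pow_geom_near j, ENNReal.ofReal_mul (by positivity),
            ENNReal.ofReal_mul (Real.rpow_nonneg hx.le _),
            ENNReal.ofReal_pow (Real.rpow_nonneg (by norm_num) _)]
  -- far annuli bound
  have hfar : ∀ j : ℕ,
      ∫⁻ η in {η | A ^ (-2:ℝ) * (2:ℝ)^((j:ℝ)) < |x - η| ∧
          |x - η| ≤ A ^ (-2:ℝ) * (2:ℝ)^((j:ℝ)+1)},
        ind F A η * ENNReal.ofReal (|x - η| ^ (-(1:ℝ)/2))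
      ≤ ENNReal.ofReal (A ^ ((1:ℝ)/2)) * ENNReal.ofReal ((2:ℝ)^((2:ℝ)-q)) *
          ENNReal.ofReal ((2:ℝ)^((1-q)/2)) ^ j := by
    intro j
    have hcpos : 0 < A ^ (-2:ℝ) * (2:ℝ)^((j:ℝ)) :=
      mul_pos hR (Real.rpow_pos_of_pos two_pos _)
    have hdpos : 0 < A ^ (-2:ℝ) * (2:ℝ)^((j:ℝ)+1) :=
      mul_pos hR (Real.rpow_pos_of_pos two_pos _)
    have hmass := mass_q hF hF0 (by linarith : (0:ℝ) < q) hq2 HQ hx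
      (show x - A ^ (-2:ℝ) * (2:ℝ)^((j:ℝ)+1) < x + A ^ (-2:ℝ) * (2:ℝ)^((j:ℝ)+1) by linarith)
    rw [show x + A ^ (-2:ℝ) * (2:ℝ)^((j:ℝ)+1) - (x - A ^ (-2:ℝ) * (2:ℝ)^((j:ℝ)+1))
        = (2:ℝ)^(1:ℝ) * (A ^ (-2:ℝ) * (2:ℝ)^((j:ℝ)+1)) by rw [Real.rpow_one]; ring] at hmass
    have hterm := term_bound hcpos _ hmass
    calc ∫⁻ η in {η | A ^ (-2:ℝ) * (2:ℝ)^((j:ℝ)) < |x - η| ∧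
          |x - η| ≤ A ^ (-2:ℝ) * (2:ℝ)^((j:ℝ)+1)},
        ind F A η * ENNReal.ofReal (|x - η| ^ (-(1:ℝ)/2))
        ≤ ENNReal.ofReal ((A ^ (-2:ℝ) * (2:ℝ)^((j:ℝ))) ^ (-(1:ℝ)/2)) *
            (ENNReal.ofReal (A ^ ((3:ℝ)/2 - q)) *
              ENNReal.ofReal (((2:ℝ)^(1:ℝ) * (A ^ (-2:ℝ) * (2:ℝ)^((j:ℝ)+1))) ^ (1 - q/2))) :=
          hterm
      _ = ENNReal.ofReal ((A ^ (-2:ℝ) * (2:ℝ)^((j:ℝ))) ^ (-(1:ℝ)/2) *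
            (A ^ ((3:ℝ)/2 - q) *
              ((2:ℝ)^(1:ℝ) * (A ^ (-2:ℝ) * (2:ℝ)^((j:ℝ)+1))) ^ (1 - q/2))) := by
          rw [← ENNReal.ofReal_mul (Real.rpow_nonneg hx.le _),
            ← ENNReal.ofReal_mul (Real.rpow_nonneg hcpos.le _)]
      _ = ENNReal.ofReal (A ^ ((1:ℝ)/2) * (2:ℝ)^((2:ℝ)-q) * (2:ℝ)^((j:ℝ)*((1-q)/2))) := by
          rw [far_id A hx q (j:ℝ)]
      _ = ENNReal.ofReal (A ^ ((1:ℝ)/2)) * ENNReal.ofReal ((2:ℝ)^((2:ℝ)-q)) *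
            ENNReal.ofReal ((2:ℝ)^((1-q)/2)) ^ j := by
          rw [pow_geom_far q j, ENNReal.ofReal_mul (by positivity),
            ENNReal.ofReal_mul (Real.rpow_nonneg hx.le _),
            ENNReal.ofReal_pow (Real.rpow_nonneg (by norm_num) _)]
  -- covering
  have hcov : (univ : Set ℝ) ⊆ ({x} : Set ℝ) ∪
      ((⋃ j : ℕ, {η | A ^ (-2:ℝ) * (2:ℝ)^(-(j:ℝ)-1) < |x - η| ∧
          |x - η| ≤ A ^ (-2:ℝ) * (2:ℝ)^(-(j:ℝ))}) ∪
       (⋃ j : ℕ, {η | A ^ (-2:ℝ) * (2:ℝ)^((j:ℝ)) < |x - η| ∧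
          |x - η| ≤ A ^ (-2:ℝ) * (2:ℝ)^((j:ℝ)+1)})) := by
    intro η _
    rcases eq_or_ne η x with rfl | hne
    · exact Or.inl rfl
    · have hu : 0 < |x - η| := abs_pos.mpr (sub_ne_zero.mpr (Ne.symm hne))
      rcases cover hR hu with ⟨j, hj⟩ | ⟨j, hj⟩
      · exact Or.inr (Or.inl (mem_iUnion.mpr ⟨j, hj⟩))
      · exact Or.inr (Or.inr (mem_iUnion.mpr ⟨j, hj⟩))
  calc ∫⁻ η, ind F A η * ENNReal.ofReal (|x - η| ^ (-(1:ℝ)/2))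
      = ∫⁻ η in univ, ind F A η * ENNReal.ofReal (|x - η| ^ (-(1:ℝ)/2)) :=
        (setLIntegral_univ _).symm
    _ ≤ ∫⁻ η in ({x} : Set ℝ) ∪
        ((⋃ j : ℕ, {η | A ^ (-2:ℝ) * (2:ℝ)^(-(j:ℝ)-1) < |x - η| ∧
            |x - η| ≤ A ^ (-2:ℝ) * (2:ℝ)^(-(j:ℝ))}) ∪
         (⋃ j : ℕ, {η | A ^ (-2:ℝ) * (2:ℝ)^((j:ℝ)) < |x - η| ∧
            |x - η| ≤ A ^ (-2:ℝ) * (2:ℝ)^((j:ℝ)+1)})),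
          ind F A η * ENNReal.ofReal (|x - η| ^ (-(1:ℝ)/2)) :=
        lintegral_mono_set hcov
    _ ≤ (∫⁻ η in ({x} : Set ℝ), ind F A η * ENNReal.ofReal (|x - η| ^ (-(1:ℝ)/2))) +
        ((∫⁻ η in ⋃ j : ℕ, {η | A ^ (-2:ℝ) * (2:ℝ)^(-(j:ℝ)-1) < |x - η| ∧
            |x - η| ≤ A ^ (-2:ℝ) * (2:ℝ)^(-(j:ℝ))},
          ind F A η * ENNReal.ofReal (|x - η| ^ (-(1:ℝ)/2))) +
         (∫⁻ η in ⋃ j : ℕ, {η | A ^ (-2:ℝ) * (2:ℝ)^((j:ℝ)) < |x - η| ∧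
            |x - η| ≤ A ^ (-2:ℝ) * (2:ℝ)^((j:ℝ)+1)},
          ind F A η * ENNReal.ofReal (|x - η| ^ (-(1:ℝ)/2)))) :=
        le_trans (lintegral_union_le _ _ _) (by gcongr; exact lintegral_union_le _ _ _)
    _ ≤ 0 + ((∑' j : ℕ, ∫⁻ η in {η | A ^ (-2:ℝ) * (2:ℝ)^(-(j:ℝ)-1) < |x - η| ∧
            |x - η| ≤ A ^ (-2:ℝ) * (2:ℝ)^(-(j:ℝ))},
          ind F A η * ENNReal.ofReal (|x - η| ^ (-(1:ℝ)/2))) +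
        (∑' j : ℕ, ∫⁻ η in {η | A ^ (-2:ℝ) * (2:ℝ)^((j:ℝ)) < |x - η| ∧
            |x - η| ≤ A ^ (-2:ℝ) * (2:ℝ)^((j:ℝ)+1)},
          ind F A η * ENNReal.ofReal (|x - η| ^ (-(1:ℝ)/2)))) := by
        gcongr
        · exact le_of_eq (setLIntegral_measure_zero _ _ Real.volume_singleton)
        · exact lintegral_iUnion_le _ _
        · exact lintegral_iUnion_le _ _
    _ ≤ 0 + ((∑' j : ℕ, ENNReal.ofReal (A ^ ((1:ℝ)/2)) * ENNReal.ofReal ((2:ℝ)^((3:ℝ)/2)) *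
            ENNReal.ofReal ((2:ℝ)^(-(1:ℝ)/2)) ^ j) +
        (∑' j : ℕ, ENNReal.ofReal (A ^ ((1:ℝ)/2)) * ENNReal.ofReal ((2:ℝ)^((2:ℝ)-q)) *
            ENNReal.ofReal ((2:ℝ)^((1-q)/2)) ^ j)) := by
        gcongr
        · exact hnear _
        · exact hfar _
    _ = ENNReal.ofReal (A ^ ((1:ℝ)/2)) * Dconst q := by
        rw [zero_add, ENNReal.tsum_mul_left, ENNReal.tsum_mul_left,
          ENNReal.tsum_geometric, ENNReal.tsum_geometric, Dconst]
        ring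


lemma reduce {F : ℝ → ℝ} (hF : Measurable F) {p : ℝ} (hp : 3/2 < p)
    (H : ∀ a b : ℝ, a < b →
      ∫⁻ ζ in Ioo a b, ENNReal.ofReal (F ζ) ^ p ≤ ENNReal.ofReal ((b-a)^(1-p/2))) :
    ∀ a b : ℝ, a < b →
      ∫⁻ ζ in Ioo a b, ENNReal.ofReal (F ζ) ^ ((3:ℝ)/2)
        ≤ ENNReal.ofReal ((b-a)^(1-(3:ℝ)/2/2)) := by
  intro a b hab
  have hp0 : 0 < p := by linarith
  have hP1 : 1 < p / ((3:ℝ)/2) := by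
    rw [lt_div_iff₀ (by norm_num : (0:ℝ) < (3:ℝ)/2)]; linarith
  have hpq := Real.HolderConjugate.conjExponent hP1
  have hQ1 : 1 < Real.conjExponent (p / ((3:ℝ)/2)) := hpq.symm.lt
  have hf : AEMeasurable (fun ζ => ENNReal.ofReal (F ζ) ^ ((3:ℝ)/2))
      (volume.restrict (Ioo a b)) := (hF.ennreal_ofReal.pow_const _).aemeasurable
  have hH := ENNReal.lintegral_mul_le_Lp_mul_Lq (volume.restrict (Ioo a b)) hpq hf
    (aemeasurable_const : AEMeasurable (fun _ : ℝ => (1:ℝ≥0∞)) _)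
  simp only [Pi.mul_apply, mul_one, ENNReal.one_rpow, setLIntegral_one, Real.volume_Ioo,
    Measure.restrict_apply MeasurableSet.univ, univ_inter] at hH
  have hmul : ∀ ζ : ℝ, (ENNReal.ofReal (F ζ) ^ ((3:ℝ)/2)) ^ (p / ((3:ℝ)/2))
      = ENNReal.ofReal (F ζ) ^ p := by
    intro ζ
    rw [← ENNReal.rpow_mul]
    congr 1
    field_simp
  simp only [hmul] at hH
  have hba : (0:ℝ) < b - a := by linarith
  calc ∫⁻ ζ in Ioo a b, ENNReal.ofReal (F ζ) ^ ((3:ℝ)/2)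
      ≤ (∫⁻ ζ in Ioo a b, ENNReal.ofReal (F ζ) ^ p) ^ (1 / (p / ((3:ℝ)/2))) *
          ENNReal.ofReal (b - a) ^ (1 / Real.conjExponent (p / ((3:ℝ)/2))) := hH
    _ ≤ (ENNReal.ofReal ((b-a)^(1-p/2))) ^ (1 / (p / ((3:ℝ)/2))) *
          ENNReal.ofReal (b - a) ^ (1 / Real.conjExponent (p / ((3:ℝ)/2))) := by
        gcongr
        · exact (H a b hab)
    _ = ENNReal.ofReal (((b-a)^(1-p/2)) ^ (1 / (p / ((3:ℝ)/2)))) *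
          ENNReal.ofReal ((b - a) ^ (1 / Real.conjExponent (p / ((3:ℝ)/2)))) := by
        rw [ENNReal.ofReal_rpow_of_nonneg (Real.rpow_nonneg hba.le _) (by positivity),
          ENNReal.ofReal_rpow_of_nonneg hba.le (by positivity)]
    _ = ENNReal.ofReal ((b-a) ^ ((1-p/2) * (1 / (p / ((3:ℝ)/2)))) *
          (b - a) ^ (1 / Real.conjExponent (p / ((3:ℝ)/2)))) := by
        rw [← Real.rpow_mul hba.le, ENNReal.ofReal_mul (Real.rpow_nonneg hba.le _)]
    _ = ENNReal.ofReal ((b-a) ^ ((1-p/2) * (1 / (p / ((3:ℝ)/2)))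
          + 1 / Real.conjExponent (p / ((3:ℝ)/2)))) := by
        rw [← Real.rpow_add hba]
    _ = ENNReal.ofReal ((b-a)^(1-(3:ℝ)/2/2)) := by
        have h1 : p ≠ 0 := hp0.ne'
        have h2 : p / ((3:ℝ)/2) - 1 ≠ 0 := by
          intro hcon; rw [sub_eq_zero] at hcon; rw [← hcon] at hP1; exact lt_irrefl _ hP1
        have heq : (1-p/2) * (1 / (p / ((3:ℝ)/2)))
            + 1 / Real.conjExponent (p / ((3:ℝ)/2)) = 1 - (3:ℝ)/2/2 := by
          rw [Real.conjExponent]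
          field_simp
          ring
        rw [heq]

end WSC


/-- The key weighted self-convolution bound behind the refined Airy Strichartz inequality. -/
theorem weighted_selfconvolution_bound (p : ℝ) (hp : 1 < p) :
    ∃ C : ℝ, 0 < C ∧ ∀ F : ℝ → ℝ, Measurable F → (∀ ζ : ℝ, 0 ≤ F ζ) →
      (∀ a b : ℝ, a < b →
        ∫⁻ ζ in Set.Ioo a b, ENNReal.ofReal (F ζ ^ p) ≤
          ENNReal.ofReal ((b - a) ^ (1 - p/2))) →
      ∫⁻ q : ℝ × ℝ,
          ENNReal.ofReal (F q.1 ^ ((3 : ℝ)/2) * F q.2 ^ ((3 : ℝ)/2) *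
            |q.1 - q.2| ^ (-(1 : ℝ)/2)) ≤
        ENNReal.ofReal C * ∫⁻ ζ : ℝ, ENNReal.ofReal (F ζ ^ 2) := by
  classical
  have hq1 : 1 < min p ((3:ℝ)/2) := lt_min hp (by norm_num)
  have hq2 : min p ((3:ℝ)/2) ≤ 3/2 := min_le_right _ _
  refine ⟨(2 * WSC.Dconst (min p ((3:ℝ)/2))).toReal + 1, by positivity, ?_⟩
  intro F hF hF0 H
  have H' : ∀ a b : ℝ, a < b →
      ∫⁻ ζ in Set.Ioo a b, ENNReal.ofReal (F ζ) ^ p ≤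
        ENNReal.ofReal ((b - a) ^ (1 - p/2)) := by
    intro a b hab
    refine le_trans (le_of_eq (lintegral_congr fun ζ => ?_)) (H a b hab)
    exact ENNReal.ofReal_rpow_of_nonneg (hF0 ζ) (by linarith)
  have HQ : ∀ a b : ℝ, a < b →
      ∫⁻ ζ in Set.Ioo a b, ENNReal.ofReal (F ζ) ^ (min p ((3:ℝ)/2)) ≤
        ENNReal.ofReal ((b - a) ^ (1 - (min p ((3:ℝ)/2))/2)) := by
    rcases le_or_gt p ((3:ℝ)/2) with hle | hlt
    · intro a b hab
      rw [min_eq_left hle]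
      exact H' a b hab
    · intro a b hab
      rw [min_eq_right hlt.le]
      exact WSC.reduce hF hlt H' a b hab
  -- measurability
  set T : Set (ℝ × ℝ) := {z | F z.2 ≤ F z.1} with hT
  have hTm : MeasurableSet T := measurableSet_le (hF.comp measurable_snd) (hF.comp measurable_fst)
  set h : ℝ × ℝ → ℝ≥0∞ := fun z =>
    ENNReal.ofReal (F z.1) ^ ((3:ℝ)/2) * ENNReal.ofReal (F z.2) ^ ((3:ℝ)/2) *
      ENNReal.ofReal (|z.1 - z.2| ^ (-(1:ℝ)/2)) with hh
  have hWm : Measurable fun z : ℝ × ℝ => ENNReal.ofReal (|z.1 - z.2| ^ (-(1:ℝ)/2)) :=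
    ((measurable_fst.sub measurable_snd).abs.pow_const _).ennreal_ofReal
  have hhm : Measurable h :=
    (((hF.comp measurable_fst).ennreal_ofReal.pow_const _).mul
      ((hF.comp measurable_snd).ennreal_ofReal.pow_const _)).mul hWm
  have hkm : Measurable (T.indicator h) := hhm.indicator hTm
  -- rewrite integrand
  have hint : ∀ z : ℝ × ℝ,
      ENNReal.ofReal (F z.1 ^ ((3 : ℝ)/2) * F z.2 ^ ((3 : ℝ)/2) * |z.1 - z.2| ^ (-(1 : ℝ)/2))
        = h z := by
    intro z
    simp only [hh]
    rw [ENNReal.ofReal_mul (mul_nonneg (Real.rpow_nonneg (hF0 _) _) (Real.rpow_nonneg (hF0 _) _)),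
      ENNReal.ofReal_mul (Real.rpow_nonneg (hF0 _) _),
      ENNReal.ofReal_rpow_of_nonneg (hF0 z.1) (by norm_num : (0:ℝ) ≤ (3:ℝ)/2),
      ENNReal.ofReal_rpow_of_nonneg (hF0 z.2) (by norm_num : (0:ℝ) ≤ (3:ℝ)/2)]
  -- pointwise splitting
  have hsplit : ∀ z : ℝ × ℝ, h z ≤ T.indicator h z + T.indicator h z.swap := by
    intro z
    by_cases hz : z ∈ T
    · rw [Set.indicator_of_mem hz]
      exact le_self_add
    · have hz2 : F z.1 ≤ F z.2 := le_of_not_ge hz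
      have hz' : z.swap ∈ T := hz2
      rw [Set.indicator_of_mem hz']
      have heq : h z.swap = h z := by
        rw [hh]
        simp only [Prod.fst_swap, Prod.snd_swap]
        rw [abs_sub_comm]
        ring
      rw [heq]
      exact le_add_self
  -- swap invariance
  have hswap : ∫⁻ z : ℝ × ℝ, T.indicator h z.swap = ∫⁻ z : ℝ × ℝ, T.indicator h z := by
    have hmapeq : (volume : Measure (ℝ × ℝ)).map Prod.swap = volume :=
      MeasureTheory.Measure.measurePreserving_swap.map_eq
    rw [← lintegral_map hkm measurable_swap, hmapeq]
  -- slice bound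
  have hslice : ∀ x : ℝ, (∫⁻ y, T.indicator h (x, y)) ≤
      WSC.Dconst (min p ((3:ℝ)/2)) * ENNReal.ofReal (F x ^ 2) := by
    intro x
    have hrw : ∀ y : ℝ, T.indicator h (x, y) = ENNReal.ofReal (F x) ^ ((3:ℝ)/2) *
        (WSC.ind F (F x) y * ENNReal.ofReal (|x - y| ^ (-(1:ℝ)/2))) := by
      intro y
      by_cases hy : F y ≤ F x
      · rw [Set.indicator_of_mem (show (x, y) ∈ T from hy), WSC.ind,
          Set.indicator_of_mem (show y ∈ {η | F η ≤ F x} from hy), hh]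
        ring
      · rw [Set.indicator_of_notMem (show (x, y) ∉ T from hy), WSC.ind,
          Set.indicator_of_notMem (show y ∉ {η | F η ≤ F x} from hy), zero_mul, mul_zero]
    have hgm : Measurable fun y : ℝ =>
        WSC.ind F (F x) y * ENNReal.ofReal (|x - y| ^ (-(1:ℝ)/2)) :=
      (WSC.ind_meas hF _).mul
        (((measurable_const.sub measurable_id).abs.pow_const _).ennreal_ofReal)
    rw [lintegral_congr hrw, lintegral_const_mul _ hgm]
    rcases eq_or_lt_of_le (hF0 x) with h0 | h0
    · rw [← h0, ENNReal.ofReal_zero, ENNReal.zero_rpow_of_pos (by norm_num : (0:ℝ) < 3/2),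
        zero_mul]
      exact zero_le'
    · calc ENNReal.ofReal (F x) ^ ((3:ℝ)/2) *
          ∫⁻ y, WSC.ind F (F x) y * ENNReal.ofReal (|x - y| ^ (-(1:ℝ)/2))
          ≤ ENNReal.ofReal (F x) ^ ((3:ℝ)/2) *
            (ENNReal.ofReal (F x ^ ((1:ℝ)/2)) * WSC.Dconst (min p ((3:ℝ)/2))) :=
            mul_le_mul_right (WSC.inner_bound hF hF0 hq1 hq2 HQ x h0) _
        _ = ENNReal.ofReal (F x ^ 2) * WSC.Dconst (min p ((3:ℝ)/2)) := by
            rw [ENNReal.ofReal_rpow_of_nonneg (hF0 x) (by norm_num : (0:ℝ) ≤ (3:ℝ)/2),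
              ← mul_assoc, ← ENNReal.ofReal_mul (Real.rpow_nonneg (hF0 x) _),
              show F x ^ ((3:ℝ)/2) * F x ^ ((1:ℝ)/2) = F x ^ 2 by
                rw [← Real.rpow_natCast (F x) 2, ← Real.rpow_add h0]; norm_num]
        _ = WSC.Dconst (min p ((3:ℝ)/2)) * ENNReal.ofReal (F x ^ 2) := mul_comm _ _
  -- assemble
  have hF2m : Measurable fun x : ℝ => ENNReal.ofReal (F x ^ 2) :=
    (hF.pow_const 2).ennreal_ofReal
  have h2D : (2 : ℝ≥0∞) * WSC.Dconst (min p ((3:ℝ)/2)) ≠ ⊤ :=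
    ENNReal.mul_ne_top (by norm_num) (WSC.Dconst_ne_top hq1)
  calc ∫⁻ z : ℝ × ℝ,
      ENNReal.ofReal (F z.1 ^ ((3 : ℝ)/2) * F z.2 ^ ((3 : ℝ)/2) * |z.1 - z.2| ^ (-(1 : ℝ)/2))
      = ∫⁻ z : ℝ × ℝ, h z := lintegral_congr hint
    _ ≤ ∫⁻ z : ℝ × ℝ, (T.indicator h z + T.indicator h z.swap) := lintegral_mono hsplit
    _ = (∫⁻ z : ℝ × ℝ, T.indicator h z) + ∫⁻ z : ℝ × ℝ, T.indicator h z.swap :=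
        lintegral_add_left hkm _
    _ = 2 * ∫⁻ z : ℝ × ℝ, T.indicator h z := by rw [hswap, two_mul]
    _ = 2 * ∫⁻ x : ℝ, ∫⁻ y : ℝ, T.indicator h (x, y) := by
        rw [show (∫⁻ z : ℝ × ℝ, T.indicator h z) = ∫⁻ x : ℝ, ∫⁻ y : ℝ, T.indicator h (x, y)
          from lintegral_prod _ hkm.aemeasurable]
    _ ≤ 2 * ∫⁻ x : ℝ, WSC.Dconst (min p ((3:ℝ)/2)) * ENNReal.ofReal (F x ^ 2) := by
        gcongr with x
        exact hslice x
    _ = 2 * (WSC.Dconst (min p ((3:ℝ)/2)) * ∫⁻ x : ℝ, ENNReal.ofReal (F x ^ 2)) := by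
        rw [lintegral_const_mul _ hF2m]
    _ = (2 * WSC.Dconst (min p ((3:ℝ)/2))) * ∫⁻ x : ℝ, ENNReal.ofReal (F x ^ 2) := by
        ring
    _ ≤ ENNReal.ofReal ((2 * WSC.Dconst (min p ((3:ℝ)/2))).toReal + 1) *
          ∫⁻ x : ℝ, ENNReal.ofReal (F x ^ 2) := by
        refine mul_le_mul_left ?_ _
        calc 2 * WSC.Dconst (min p ((3:ℝ)/2))
            = ENNReal.ofReal ((2 * WSC.Dconst (min p ((3:ℝ)/2))).toReal) :=
              (ENNReal.ofReal_toReal h2D).symm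
          _ ≤ ENNReal.ofReal ((2 * WSC.Dconst (min p ((3:ℝ)/2))).toReal + 1) :=
              ENNReal.ofReal_le_ofReal (by linarith)

end
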